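/- Let Ω ⊂ ℝ^N be open and bounded, g₁, g₂ ∈ L^∞(Ω) with g₁, g₂ ≥ m > 0 a.e. If v₁ ∈ W₀^{1,p}(Ω) satisfies |∇v₁| ≤ g₁ a.e., then the function v̂₂ = v₁ / (1 + α/m), where α = ‖g₁ - g₂‖_{L^∞(Ω)}, satisfies |∇v̂₂| ≤ g₂ a.e. and ‖∇(v₁ - v̂₂)‖_{L^p(Ω)} ≤ (1/m) ‖∇v₁‖_{L^p(Ω)} ‖g₁ - g₂‖_{L^∞(Ω)}. -/

import Mathlib

open MeasureTheory
open scoped ENNReal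

theorem constraint_scaling_lemma {N : ℕ} (Ω : Set (EuclideanSpace ℝ (Fin N)))
    (hΩ : IsOpen Ω) (hbd : Bornology.IsBounded Ω)
    (p : ℝ≥0∞) (hp : 1 ≤ p) (hp' : p ≠ ⊤)
    (g₁ g₂ : EuclideanSpace ℝ (Fin N) → ℝ) (m : ℝ) (hm : 0 < m)
    (hg₁m : ∀ᵐ x ∂(volume.restrict Ω), m ≤ g₁ x)
    (hg₂m : ∀ᵐ x ∂(volume.restrict Ω), m ≤ g₂ x)
    (hfin : eLpNorm (fun x => g₁ x - g₂ x) ⊤ (volume.restrict Ω) ≠ ⊤)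
    (v₁ : EuclideanSpace ℝ (Fin N) → ℝ) (hv₁ : Differentiable ℝ v₁)
    (hgrad : ∀ᵐ x ∂(volume.restrict Ω), ‖fderiv ℝ v₁ x‖ ≤ g₁ x) :
    let α : ℝ := (eLpNorm (fun x => g₁ x - g₂ x) ⊤ (volume.restrict Ω)).toReal
    let vhat₂ : EuclideanSpace ℝ (Fin N) → ℝ := fun x => v₁ x / (1 + α / m)
    (∀ᵐ x ∂(volume.restrict Ω), ‖fderiv ℝ vhat₂ x‖ ≤ g₂ x) ∧
      eLpNorm (fun x => ‖fderiv ℝ (fun y => v₁ y - vhat₂ y) x‖) p (volume.restrict Ω)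
        ≤ ENNReal.ofReal ((1 / m) * α) *
            eLpNorm (fun x => ‖fderiv ℝ v₁ x‖) p (volume.restrict Ω) := by
  intro α vhat₂
  have hα0 : 0 ≤ α := ENNReal.toReal_nonneg
  set d : ℝ := 1 + α / m with hd
  have hd1 : 1 ≤ d := by
    have h : 0 ≤ α / m := div_nonneg hα0 hm.le
    rw [hd]; linarith
  have hd0 : 0 < d := lt_of_lt_of_le one_pos hd1
  -- a.e. bound |g₁ - g₂| ≤ α
  have habs : ∀ᵐ x ∂(volume.restrict Ω), |g₁ x - g₂ x| ≤ α := by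
    have h := ae_le_eLpNormEssSup (f := fun x => g₁ x - g₂ x)
      (μ := volume.restrict Ω)
    rw [eLpNorm_exponent_top] at hfin
    filter_upwards [h] with x hx
    have := ENNReal.toReal_mono hfin hx
    simpa [α, eLpNorm_exponent_top] using this
  -- derivative of vhat₂
  have hvd : ∀ x, fderiv ℝ vhat₂ x = d⁻¹ • fderiv ℝ v₁ x := by
    intro x
    have : vhat₂ = fun y => d⁻¹ * v₁ y := by
      funext y
      show v₁ y / d = d⁻¹ * v₁ y
      rw [div_eq_inv_mul]
    rw [this, fderiv_const_mul (hv₁ x)]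
  constructor
  · filter_upwards [habs, hgrad, hg₂m] with x h1 h2 h3
    rw [hvd x, norm_smul]
    have hle : ‖fderiv ℝ v₁ x‖ ≤ g₂ x + α := by
      have := (abs_le.mp h1).2
      linarith
    have hkey : g₂ x + α ≤ d * g₂ x := by
      have hαm : α ≤ α / m * g₂ x := by
        have h5 : α / m * m ≤ α / m * g₂ x :=
          mul_le_mul_of_nonneg_left h3 (div_nonneg hα0 hm.le)
        rwa [div_mul_cancel₀ _ hm.ne'] at h5
      have hdg : d * g₂ x = g₂ x + α / m * g₂ x := by rw [hd]; ring
      rw [hdg]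
      have := hαm
      linarith
    have hnn : (0:ℝ) ≤ ‖fderiv ℝ v₁ x‖ := norm_nonneg _
    calc ‖d⁻¹‖ * ‖fderiv ℝ v₁ x‖ = d⁻¹ * ‖fderiv ℝ v₁ x‖ := by
          rw [Real.norm_eq_abs, abs_of_pos (inv_pos.mpr hd0)]
      _ ≤ d⁻¹ * (g₂ x + α) := by
          exact mul_le_mul_of_nonneg_left hle (inv_pos.mpr hd0).le
      _ ≤ g₂ x := by
          rw [inv_mul_le_iff₀ hd0]
          linarith [hkey]
  · set k : ℝ := 1 - d⁻¹ with hk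
    have hk0 : 0 ≤ k := by
      have : d⁻¹ ≤ 1 := inv_le_one_of_one_le₀ hd1
      simp [hk]; linarith
    have hkle : k ≤ α / m := by
      have h1 : k = (d - 1) / d := by
        rw [hk, sub_div, div_self hd0.ne', one_div]
      have h2 : (d - 1) / d ≤ d - 1 := by
        apply div_le_self (by linarith) hd1
      have : d - 1 = α / m := by simp [hd]
      linarith [h1 ▸ h2, this ▸ (h1 ▸ h2)]
    have hfe : (fun x => ‖fderiv ℝ (fun y => v₁ y - vhat₂ y) x‖)
        = k • (fun x => ‖fderiv ℝ v₁ x‖) := by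
      funext x
      have h1 : (fun y => v₁ y - vhat₂ y) = fun y => k * v₁ y := by
        funext y
        show v₁ y - v₁ y / d = k * v₁ y
        rw [hk]; field_simp
      rw [h1, fderiv_const_mul (hv₁ x)]
      simp [norm_smul, Real.norm_eq_abs, abs_of_nonneg hk0]
    rw [hfe, eLpNorm_const_smul]
    have hcoe : (‖k‖₊ : ℝ≥0∞) ≤ ENNReal.ofReal ((1 / m) * α) := by
      have he : (1 / m) * α = α / m := by ring
      rw [he, show (‖k‖₊ : ℝ≥0∞) = ‖k‖ₑ from rfl, Real.enorm_eq_ofReal hk0]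
      exact ENNReal.ofReal_le_ofReal hkle
    calc (‖k‖₊ : ℝ≥0∞) • eLpNorm (fun x => ‖fderiv ℝ v₁ x‖) p (volume.restrict Ω)
        = (‖k‖₊ : ℝ≥0∞) * eLpNorm (fun x => ‖fderiv ℝ v₁ x‖) p (volume.restrict Ω) := rfl
      _ ≤ ENNReal.ofReal ((1 / m) * α) *
            eLpNorm (fun x => ‖fderiv ℝ v₁ x‖) p (volume.restrict Ω) :=
          mul_le_mul_left hcoe _
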